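/- For every even integer r = 2s with 0 ≤ r ≤ n and every choice of real numbers X^{iα}_β (1 ≤ i ≤ n, 1 ≤ α, β ≤ l), the n-form Γ_r satisfies Γ_r ∧ ν = r!(n−r)! · S_r · θ^1 ∧ θ^2 ∧ ⋯ ∧ θ^{n+l} in the exterior algebra, where ν := θ^{n+1} ∧ ⋯ ∧ θ^{n+l}. -/

import Mathlib

open scoped BigOperators

noncomputable section

/-- The generalized Kronecker symbol `δ^{i₁…i_r}_{j₁…j_r}`:
the determinant of the `r × r` matrix whose `(a,b)` entry is `δ^{i_a}_{j_b}`. -/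
def gKron {n r : ℕ} (i j : Fin r → Fin n) : ℝ :=
  Matrix.det (Matrix.of fun a b : Fin r => if i a = j b then (1 : ℝ) else 0)

/-- The pairing `⟨B_{i₁}^{j₁}, B_{i₂}^{j₂}⟩ = Σ_α A^α{}_{i₁}^{j₁} A^α{}_{i₂}^{j₂}`.
Here `A α` is a matrix with the convention that `A^α{}_i^j` (row `j`, column `i`)
is `A α j i`. -/
def pairing {n l : ℕ} (A : Fin l → Matrix (Fin n) (Fin n) ℝ)
    (i₁ j₁ i₂ j₂ : Fin n) : ℝ :=
  ∑ α : Fin l, A α j₁ i₁ * A α j₂ i₂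

/-- The product `⟨B_{i₁}^{j₁},B_{i₂}^{j₂}⟩ ⋯ ⟨B_{i_{2s-1}}^{j_{2s-1}},B_{i_{2s}}^{j_{2s}}⟩`. -/
def pairProd {n l : ℕ} (A : Fin l → Matrix (Fin n) (Fin n) ℝ) (s : ℕ)
    (i j : Fin (2 * s) → Fin n) : ℝ :=
  ∏ t : Fin s,
    pairing A (i ⟨2 * t.1, by omega⟩) (j ⟨2 * t.1, by omega⟩)
      (i ⟨2 * t.1 + 1, by omega⟩) (j ⟨2 * t.1 + 1, by omega⟩)

/-- The `r`-th mean curvature `S_r` for `r = 2s`. -/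
def meanCurv {n l : ℕ} (A : Fin l → Matrix (Fin n) (Fin n) ℝ) (s : ℕ) : ℝ :=
  (1 / (Nat.factorial (2 * s) : ℝ)) *
    ∑ i : Fin (2 * s) → Fin n, ∑ j : Fin (2 * s) → Fin n,
      gKron i j * pairProd A s i j

/-- The generalized Newton transformation `T_r` for `r = 2s`; the entry
`(T_r)^p_u` is in row `p`, column `u`. -/
def newton {n l : ℕ} (A : Fin l → Matrix (Fin n) (Fin n) ℝ) (s : ℕ) :
    Matrix (Fin n) (Fin n) ℝ :=
  Matrix.of fun p u =>
    (1 / (Nat.factorial (2 * s) : ℝ)) *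
      ∑ i : Fin (2 * s) → Fin n, ∑ j : Fin (2 * s) → Fin n,
        gKron (Fin.snoc i p) (Fin.snoc j u) * pairProd A s i j

/-- The transformation `T_q^α` for odd `q = 2s + 1`; the entry `(T_q^α)^p_u`
is in row `p`, column `u`. -/
def newtonOdd {n l : ℕ} (A : Fin l → Matrix (Fin n) (Fin n) ℝ) (s : ℕ) (α : Fin l) :
    Matrix (Fin n) (Fin n) ℝ :=
  Matrix.of fun p u =>
    (1 / (Nat.factorial (2 * s + 1) : ℝ)) *
      ∑ i : Fin (2 * s) → Fin n, ∑ j : Fin (2 * s) → Fin n, ∑ a : Fin n, ∑ b : Fin n,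
        gKron (Fin.snoc (Fin.snoc i a) p) (Fin.snoc (Fin.snoc j b) u)
          * pairProd A s i j * A α b a


/-- `θ^a`: the basis one-forms, realized as the generators
`ι(e_a)` of the exterior algebra of `ℝ^m`. -/
def theta {m : ℕ} (a : Fin m) : ExteriorAlgebra ℝ (Fin m → ℝ) :=
  ExteriorAlgebra.ι ℝ (Pi.single a 1)

/-- `ω^{iα} = −Σ_j A^α{}_j^i θ^j + Σ_β X^{iα}_β θ^{n+β}`, where `A^α{}_j^i = A α i j`. -/
def omegaForm {n l : ℕ} (A : Fin l → Matrix (Fin n) (Fin n) ℝ)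
    (X : Fin n → Fin l → Fin l → ℝ) (i : Fin n) (α : Fin l) :
    ExteriorAlgebra ℝ (Fin (n + l) → ℝ) :=
  (-(∑ j : Fin n, A α i j • theta (Fin.castAdd l j)))
    + ∑ β : Fin l, X i α β • theta (Fin.natAdd n β)

/-- The Brito–Naveira `n`-form `Γ_r` for `r = 2s`:
`Γ_r = Σ_{σ ∈ Σ_n} ε(σ) Σ_{β₁,…,β_s} (ω^{σ(1)β₁} ∧ ω^{σ(2)β₁}) ∧ ⋯ ∧
  (ω^{σ(2s−1)β_s} ∧ ω^{σ(2s)β_s}) ∧ θ^{σ(2s+1)} ∧ ⋯ ∧ θ^{σ(n)}`. -/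
def GammaForm {n l : ℕ} (A : Fin l → Matrix (Fin n) (Fin n) ℝ)
    (X : Fin n → Fin l → Fin l → ℝ) (s : ℕ) (h : 2 * s ≤ n) :
    ExteriorAlgebra ℝ (Fin (n + l) → ℝ) :=
  ∑ σ : Equiv.Perm (Fin n), ∑ β : Fin s → Fin l,
    ((Equiv.Perm.sign σ : ℤ) : ℝ) •
      (((List.finRange s).map (fun t =>
          omegaForm A X (σ ⟨2 * t.1, by omega⟩) (β t) *
          omegaForm A X (σ ⟨2 * t.1 + 1, by omega⟩) (β t))).prod *
        ((List.finRange (n - 2 * s)).map (fun k =>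
          theta (Fin.castAdd l (σ ⟨2 * s + k.1, by omega⟩)))).prod)

/-- `ν = θ^{n+1} ∧ ⋯ ∧ θ^{n+l}`. -/
def nuForm (n l : ℕ) : ExteriorAlgebra ℝ (Fin (n + l) → ℝ) :=
  ((List.finRange l).map (fun β => theta (Fin.natAdd n β))).prod

/-- `θ^1 ∧ θ^2 ∧ ⋯ ∧ θ^{n+l}`. -/
def volForm (n l : ℕ) : ExteriorAlgebra ℝ (Fin (n + l) → ℝ) :=
  ((List.finRange (n + l)).map (fun a => theta a)).prod

namespace Stmt7Aux

lemma finRange_map_val (m : ℕ) : (List.finRange m).map Fin.val = List.range m := by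
  apply List.ext_getElem <;> simp

/-- products over `finRange` as products over `range`. -/
lemma finRange_prod_eq_range_prod {M : Type*} [Monoid M] (m : ℕ) (f : Fin m → M) (g : ℕ → M)
    (h : ∀ (k : ℕ) (hk : k < m), f ⟨k, hk⟩ = g k) :
    ((List.finRange m).map f).prod = ((List.range m).map g).prod := by
  have h1 : (List.finRange m).map f = ((List.finRange m).map Fin.val).map g := by
    rw [List.map_map]
    apply List.map_congr_left
    intro a _
    have : f a = f ⟨a.1, a.2⟩ := by simp [Fin.eta]
    rw [this, h a.1 a.2]
    rfl
  rw [h1, finRange_map_val]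

lemma range_prod_pairs {M : Type*} [Monoid M] (f : ℕ → M) (s : ℕ) :
    ((List.range s).map (fun t => f (2*t) * f (2*t+1))).prod = ((List.range (2*s)).map f).prod := by
  induction s with
  | zero => simp
  | succ s ih =>
    rw [List.range_succ, show 2*(s+1) = 2*s + 2 by ring, List.range_add]
    simp [List.prod_append, ih, mul_assoc, List.range_succ]

lemma range_prod_split {M : Type*} [Monoid M] (f : ℕ → M) (a b : ℕ) :
    ((List.range (a+b)).map f).prod
      = ((List.range a).map f).prod * ((List.range b).map (fun k => f (a + k))).prod := by
  rw [List.range_add, List.map_append, List.prod_append, List.map_map]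
  rfl

lemma finset_range_pairs {M : Type*} [CommMonoid M] (s : ℕ) (h : ℕ → M) :
    (∏ k ∈ Finset.range (2*s), h k) = ∏ t ∈ Finset.range s, (h (2*t) * h (2*t+1)) := by
  induction s with
  | zero => simp
  | succ s ih =>
    rw [show 2*(s+1) = 2*s + 1 + 1 by ring, Finset.prod_range_succ, Finset.prod_range_succ,
      Finset.prod_range_succ, ih, mul_assoc]

lemma fin_prod_pairs {M : Type*} [CommMonoid M] (s : ℕ) (h : ℕ → M) :
    (∏ a : Fin (2*s), h a.1) = ∏ t : Fin s, (h (2*t.1) * h (2*t.1+1)) := by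
  rw [Fin.prod_univ_eq_prod_range h (2*s),
    Fin.prod_univ_eq_prod_range (fun t => h (2*t) * h (2*t+1)) s, finset_range_pairs]


lemma vol_eq_iMulti (m : ℕ) :
    ((List.finRange m).map (fun a => theta a)).prod
      = ExteriorAlgebra.ιMulti ℝ m (fun a : Fin m => Pi.single a (1:ℝ)) := by
  rw [ExteriorAlgebra.ιMulti_apply, List.ofFn_eq_map]
  rfl

lemma iMulti_eq_det_smul (m : ℕ) (v : Fin m → (Fin m → ℝ)) :
    ExteriorAlgebra.ιMulti ℝ m v
      = (Matrix.of v).det • ExteriorAlgebra.ιMulti ℝ m (fun a : Fin m => Pi.single a (1:ℝ)) := by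
  set e := Pi.basisFun ℝ (Fin m) with he
  have hcoe : ∀ a : Fin m, e a = Pi.single a (1:ℝ) := fun a => by
    rw [he]; exact Pi.basisFun_apply ℝ (Fin m) a
  have key : (ExteriorAlgebra.ιMulti ℝ m : (Fin m → ℝ) [⋀^Fin m]→ₗ[ℝ] _)
      = (LinearMap.toSpanSingleton ℝ _
          (ExteriorAlgebra.ιMulti ℝ m (fun a : Fin m => Pi.single a (1:ℝ)))).compAlternatingMap
        e.det := by
    apply Module.Basis.ext_alternating e
    intro w hw
    have hbij : Function.Bijective w := (Finite.injective_iff_bijective).1 hw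
    set σ : Equiv.Perm (Fin m) := Equiv.ofBijective w hbij with hσ
    have hwσ : ∀ i, w i = σ i := fun i => rfl
    have h1 : (fun i => e (w i)) = (⇑e ∘ ⇑σ) := by funext i; simp [hwσ]
    rw [h1, AlternatingMap.map_perm, AlternatingMap.map_perm]
    congr 1
    show ExteriorAlgebra.ιMulti ℝ m ⇑e
        = (LinearMap.toSpanSingleton ℝ _ _).compAlternatingMap e.det ⇑e
    rw [LinearMap.compAlternatingMap_apply, Module.Basis.det_self, LinearMap.toSpanSingleton_apply,
      one_smul]
    congr 1
    funext a
    exact hcoe a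
  have := congrArg (fun F => F v) key
  simp only [LinearMap.compAlternatingMap_apply, LinearMap.toSpanSingleton_apply] at this
  rw [this]
  congr 1
  rw [he, Pi.basisFun_det]
  rfl

lemma prod_ι_eq_det (n l : ℕ) (v : Fin (n+l) → (Fin (n+l) → ℝ)) :
    ((List.finRange (n+l)).map (fun k => ExteriorAlgebra.ι ℝ (v k))).prod
      = (Matrix.of v).det • volForm n l := by
  rw [← List.ofFn_eq_map, ← ExteriorAlgebra.ιMulti_apply, iMulti_eq_det_smul, volForm,
    vol_eq_iMulti]


variable {n r : ℕ}

def headEquiv (hr : r ≤ n) : {x : Fin n // x.1 < r} ≃ Fin r where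
  toFun x := ⟨x.1.1, x.2⟩
  invFun a := ⟨Fin.castLE hr a, a.2⟩
  left_inv x := by ext; rfl
  right_inv a := by ext; rfl

def corangeEquiv (j : Fin r → Fin n) (hj : Function.Injective j) :
    Fin r ≃ {x : Fin n // ∃ a, j a = x} where
  toFun a := ⟨j a, a, rfl⟩
  invFun x := x.2.choose
  left_inv a := hj (Exists.choose_spec (⟨a, rfl⟩ : ∃ b, j b = j a))
  right_inv x := Subtype.ext x.2.choose_spec

def fiberEquiv (hr : r ≤ n) (j : Fin r → Fin n) (hj : Function.Injective j) :
    {σ : Equiv.Perm (Fin n) // ∀ a, σ (Fin.castLE hr a) = j a}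
      ≃ ({x : Fin n // ¬ x.1 < r} ≃ {x : Fin n // ¬ ∃ a, j a = x}) where
  toFun := fun ⟨σ, hσ⟩ =>
    { toFun := fun x => ⟨σ x.1, by
        rintro ⟨a, ha⟩
        have h2 : σ (Fin.castLE hr a) = σ x.1 := by rw [hσ a]; exact ha
        have hx : Fin.castLE hr a = x.1 := σ.injective h2
        exact x.2 (by rw [← hx]; exact a.2)⟩
      invFun := fun y => ⟨σ.symm y.1, by
        intro hlt
        apply y.2
        refine ⟨⟨(σ.symm y.1).1, hlt⟩, ?_⟩
        rw [← hσ ⟨(σ.symm y.1).1, hlt⟩]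
        have h3 : Fin.castLE hr ⟨(σ.symm y.1).1, hlt⟩ = σ.symm y.1 := by ext; rfl
        rw [h3, Equiv.apply_symm_apply]⟩
      left_inv := fun x => by ext; simp
      right_inv := fun y => by ext; simp }
  invFun := fun e => by
    refine ⟨?_, ?_⟩
    · have hinj : Function.Injective (fun x : Fin n =>
        if h : x.1 < r then j ⟨x.1, h⟩ else (e ⟨x, h⟩).1) := by
        intro x y hxy
        by_cases hx : x.1 < r <;> by_cases hy : y.1 < r <;>
          simp only [dif_pos, dif_neg, hx, hy, dite_true, dite_false] at hxy
        · have h5 : (⟨x.1, hx⟩ : Fin r) = ⟨y.1, hy⟩ := hj hxy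
          injection h5 with h6
          exact Fin.ext h6
        · exact absurd ⟨⟨x.1, hx⟩, hxy⟩ (e ⟨y, hy⟩).2
        · exact absurd ⟨⟨y.1, hy⟩, hxy.symm⟩ (e ⟨x, hx⟩).2
        · exact congrArg Subtype.val (e.injective (Subtype.ext hxy))
      exact Equiv.ofBijective _ ((Finite.injective_iff_bijective).1 hinj)
    · intro a
      show (if h : (Fin.castLE hr a).1 < r then j ⟨(Fin.castLE hr a).1, h⟩
        else (e ⟨Fin.castLE hr a, h⟩).1) = j a
      rw [dif_pos (show (Fin.castLE hr a : Fin n).1 < r from a.2)]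
      exact congrArg j (Fin.ext rfl)
  left_inv := fun ⟨σ, hσ⟩ => by
    apply Subtype.ext
    apply Equiv.ext
    intro x
    show (if h : x.1 < r then j ⟨x.1, h⟩ else σ x) = σ x
    by_cases h : x.1 < r
    · rw [dif_pos h, ← hσ ⟨x.1, h⟩]
      exact congrArg σ (Fin.ext rfl)
    · rw [dif_neg h]
  right_inv := fun e => by
    apply Equiv.ext
    intro x
    apply Subtype.ext
    show (if h : x.1.1 < r then j ⟨x.1.1, h⟩ else (e ⟨x.1, h⟩).1) = (e x).1
    rw [dif_neg x.2]

lemma card_head (hr : r ≤ n) : Fintype.card {x : Fin n // x.1 < r} = r := by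
  rw [Fintype.card_congr (headEquiv hr), Fintype.card_fin]

lemma card_tail (hr : r ≤ n) : Fintype.card {x : Fin n // ¬ x.1 < r} = n - r := by
  rw [Fintype.card_subtype_compl, card_head hr, Fintype.card_fin]

lemma card_corange (hr : r ≤ n) (j : Fin r → Fin n) (hj : Function.Injective j) :
    Fintype.card {x : Fin n // ¬ ∃ a, j a = x} = n - r := by
  classical
  rw [Fintype.card_subtype_compl, ← Fintype.card_congr (corangeEquiv j hj),
    Fintype.card_fin, Fintype.card_fin]

lemma card_fiber (hr : r ≤ n) (j : Fin r → Fin n) (hj : Function.Injective j) :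
    (Finset.univ.filter
      (fun σ : Equiv.Perm (Fin n) => (fun a => σ (Fin.castLE hr a)) = j)).card
      = (n - r).factorial := by
  classical
  rw [← Fintype.card_subtype]
  rw [Fintype.card_congr (Equiv.subtypeEquivRight (fun σ => funext_iff))]
  rw [Fintype.card_congr (fiberEquiv hr j hj)]
  rw [Fintype.card_equiv (Fintype.equivOfCardEq
    (by rw [card_tail hr, card_corange hr j hj]))]
  rw [card_tail hr]

lemma image_comp_castLE (hr : r ≤ n) :
    Finset.image (fun σ : Equiv.Perm (Fin n) => (fun a => σ (Fin.castLE hr a))) Finset.univ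
      = Finset.univ.filter (fun jj : Fin r → Fin n => Function.Injective jj) := by
  classical
  ext jj
  simp only [Finset.mem_image, Finset.mem_filter, Finset.mem_univ, true_and]
  constructor
  · rintro ⟨σ, _, rfl⟩
    exact σ.injective.comp (Fin.castLE_injective hr)
  · intro hjj
    have hpos : 0 < (Finset.univ.filter
        (fun σ : Equiv.Perm (Fin n) => (fun a => σ (Fin.castLE hr a)) = jj)).card := by
      rw [card_fiber hr jj hjj]
      exact Nat.factorial_pos _
    obtain ⟨σ, hσ⟩ := Finset.card_pos.1 hpos
    exact ⟨σ, (Finset.mem_filter.1 hσ).2⟩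


lemma ext_fixes_tail (hr : r ≤ n) (g : Equiv.Perm (Fin r)) (p : Fin n) (hp : r ≤ p.1) :
    g.extendDomain (headEquiv hr).symm p = p :=
  Equiv.Perm.extendDomain_apply_not_subtype g (headEquiv hr).symm (by omega)

lemma ext_apply_head (hr : r ≤ n) (g : Equiv.Perm (Fin r)) (a : Fin r) :
    g.extendDomain (headEquiv hr).symm (Fin.castLE hr a) = Fin.castLE hr (g a) := by
  have h1 : (Fin.castLE hr a : Fin n) = ((headEquiv hr).symm a : {x : Fin n // x.1 < r}).1 := rfl
  rw [h1, Equiv.Perm.extendDomain_apply_image]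
  rfl

lemma preserves_head (ρ : Equiv.Perm (Fin n)) (hfix : ∀ p : Fin n, r ≤ p.1 → ρ p = p) :
    ∀ x : Fin n, x.1 < r ↔ (ρ x).1 < r := by
  intro x
  constructor
  · intro hx
    by_contra hρx
    have h1 : ρ (ρ x) = ρ x := hfix (ρ x) (by omega)
    have h2 : ρ x = x := ρ.injective h1
    omega
  · intro hρx
    by_contra hx
    have h1 : ρ x = x := hfix x (by omega)
    omega

/-- restriction of a tail-fixing permutation to the head -/
def restrictHead (hr : r ≤ n) (ρ : Equiv.Perm (Fin n))
    (hfix : ∀ p : Fin n, r ≤ p.1 → ρ p = p) : Equiv.Perm (Fin r) :=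
  (headEquiv hr).permCongr (ρ.subtypePerm (fun x => (preserves_head ρ hfix x).symm))

lemma extendDomain_restrictHead (hr : r ≤ n) (ρ : Equiv.Perm (Fin n))
    (hfix : ∀ p : Fin n, r ≤ p.1 → ρ p = p) :
    (restrictHead hr ρ hfix).extendDomain (headEquiv hr).symm = ρ := by
  apply Equiv.ext
  intro x
  by_cases h : x.1 < r
  · have hx : x = Fin.castLE hr ⟨x.1, h⟩ := by ext; rfl
    rw [hx, ext_apply_head]
    show Fin.castLE hr ((headEquiv hr).permCongr _ ⟨x.1, h⟩) = _
    simp only [Equiv.permCongr_apply]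
    apply Fin.ext
    rfl
  · rw [ext_fixes_tail hr _ x (by omega), hfix x (by omega)]

lemma restrictHead_extendDomain (hr : r ≤ n) (g : Equiv.Perm (Fin r)) :
    restrictHead hr (g.extendDomain (headEquiv hr).symm)
      (fun p hp => ext_fixes_tail hr g p hp) = g := by
  apply Equiv.ext
  intro a
  apply Fin.ext
  show ((g.extendDomain (headEquiv hr).symm) (Fin.castLE hr a)).1 = (g a).1
  rw [ext_apply_head]
  rfl

lemma sum_tailfix (hr : r ≤ n) (F : Equiv.Perm (Fin n) → ℝ) :
    (∑ ρ : Equiv.Perm (Fin n), if (∀ p : Fin n, r ≤ p.1 → ρ p = p) then F ρ else 0)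
      = ∑ g : Equiv.Perm (Fin r), F (g.extendDomain (headEquiv hr).symm) := by
  classical
  rw [← Finset.sum_filter]
  symm
  apply Finset.sum_nbij' (i := fun g => g.extendDomain (headEquiv hr).symm)
    (j := fun ρ => if hfix : (∀ p : Fin n, r ≤ p.1 → ρ p = p)
      then restrictHead hr ρ hfix else 1)
  · intro g _
    simp only [Finset.mem_filter, Finset.mem_univ, true_and]
    exact fun p hp => ext_fixes_tail hr g p hp
  · intro ρ _
    exact Finset.mem_univ _
  · intro g _
    rw [dif_pos (fun p hp => ext_fixes_tail hr g p hp), restrictHead_extendDomain]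
  · intro ρ hρ
    have hfix := (Finset.mem_filter.1 hρ).2
    rw [dif_pos hfix, extendDomain_restrictHead]
  · intro g _
    rfl

lemma sum_perm_swap_zero {r : ℕ} (K : Equiv.Perm (Fin r) → ℝ) (a b : Fin r) (hab : a ≠ b)
    (hK : ∀ g, K (Equiv.swap a b * g) = K g) :
    ∑ g : Equiv.Perm (Fin r), ((Equiv.Perm.sign g : ℤ) : ℝ) * K g = 0 := by
  classical
  apply Finset.sum_involution (g := fun g _ => Equiv.swap a b * g)
  · intro g _
    rw [hK g]
    have hs : ((Equiv.Perm.sign (Equiv.swap a b * g) : ℤ) : ℝ)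
        = -((Equiv.Perm.sign g : ℤ) : ℝ) := by
      rw [Equiv.Perm.sign_mul, Equiv.Perm.sign_swap hab]
      push_cast
      ring
    rw [hs]
    ring
  · intro g _ _
    intro hgg
    have h1 : Equiv.swap a b = 1 := by
      have := congrArg (fun x => x * g⁻¹) hgg
      simpa [mul_assoc] using this
    apply hab
    have h2 : Equiv.swap a b a = (1 : Equiv.Perm (Fin r)) a := by rw [h1]
    exact (by simpa [Equiv.swap_apply_left] using h2 : b = a).symm
  · intro g _
    exact Finset.mem_univ _
  · intro g _
    rw [← mul_assoc, Equiv.swap_mul_self, one_mul]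


-- sign cast helper
lemma unit_cast_mul (u v : ℤˣ) : ((u:ℤ):ℝ) * (((u*v :ℤˣ):ℤ):ℝ) = ((v:ℤ):ℝ) := by
  rcases Int.units_eq_one_or u with h | h <;> simp [h]

lemma head_reindex (hr : r ≤ n) (f : Fin n → ℝ) :
    ∏ p ∈ Finset.univ.filter (fun p : Fin n => p.1 < r), f p
      = ∏ a : Fin r, f (Fin.castLE hr a) := by
  refine Finset.prod_bij' (fun p hp => (⟨p.1, (Finset.mem_filter.1 hp).2⟩ : Fin r))
    (fun a _ => Fin.castLE hr a) ?_ ?_ ?_ ?_ ?_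
  · intro p hp; exact Finset.mem_univ _
  · intro a _
    simp only [Finset.mem_filter, Finset.mem_univ, true_and]
    exact a.2
  · intro p hp; apply Fin.ext; rfl
  · intro a _; apply Fin.ext; rfl
  · intro p hp
    exact congrArg f (Fin.ext rfl)

lemma core_count (hr : r ≤ n) (K : (Fin r → Fin n) → ℝ) :
    (∑ σ : Equiv.Perm (Fin n), K (fun a => σ (Fin.castLE hr a)))
      = ((n - r).factorial : ℝ) *
        ∑ jj ∈ Finset.univ.filter (fun j : Fin r → Fin n => Function.Injective j), K jj := by
  classical
  rw [Finset.sum_comp K (fun σ : Equiv.Perm (Fin n) => (fun a => σ (Fin.castLE hr a)))]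
  rw [image_comp_castLE hr, Finset.mul_sum]
  apply Finset.sum_congr rfl
  intro jj hjj
  have hinj : Function.Injective jj := (Finset.mem_filter.1 hjj).2
  rw [card_fiber hr jj hinj, nsmul_eq_mul]


namespace Step2

open Equiv Finset

def Bmat (n l s : ℕ) (h2s : 2*s ≤ n) (A : Fin l → Matrix (Fin n) (Fin n) ℝ)
    (σ : Equiv.Perm (Fin n)) (β : Fin s → Fin l) : Matrix (Fin n) (Fin n) ℝ :=
  Matrix.of fun p u =>
    if h : p.1 < 2*s then -(A (β ⟨p.1/2, by omega⟩) (σ p) u)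
    else (if σ p = u then (1:ℝ) else 0)

lemma hdet (n l s : ℕ) (h2s : 2*s ≤ n) (A : Fin l → Matrix (Fin n) (Fin n) ℝ)
    (σ : Equiv.Perm (Fin n)) (β : Fin s → Fin l) :
    (Bmat n l s h2s A σ β).det
      = ∑ τ : Equiv.Perm (Fin n), ((Equiv.Perm.sign τ : ℤ) : ℝ) *
          ((∏ a : Fin (2*s),
            -(A (β ⟨a.1/2, by omega⟩) (σ (Fin.castLE h2s a)) (τ (Fin.castLE h2s a))))
            * (if ∀ p : Fin n, 2*s ≤ p.1 → σ p = τ p then (1:ℝ) else 0)) := by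
  classical
  rw [← Matrix.det_transpose, Matrix.det_apply]
  apply Finset.sum_congr rfl
  intro τ _
  rw [Units.smul_def, zsmul_eq_mul]
  congr 1
  calc ∏ p : Fin n, Matrix.transpose (Bmat n l s h2s A σ β) (τ p) p
      = ∏ p : Fin n, (Bmat n l s h2s A σ β) p (τ p) :=
        Finset.prod_congr rfl (fun p _ => rfl)
    _ = (∏ p ∈ Finset.univ.filter (fun p : Fin n => p.1 < 2*s),
          (Bmat n l s h2s A σ β) p (τ p))
        * ∏ p ∈ Finset.univ.filter (fun p : Fin n => ¬ p.1 < 2*s),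
          (Bmat n l s h2s A σ β) p (τ p) :=
        (Finset.prod_filter_mul_prod_filter_not Finset.univ _ _).symm
    _ = _ := ?_
  congr 1
  · rw [head_reindex h2s]
    apply Finset.prod_congr rfl
    intro a _
    simp only [Bmat, Matrix.of_apply]
    rw [dif_pos (show (Fin.castLE h2s a : Fin n).1 < 2*s from a.2)]
    rfl
  · have h2 : ∀ p ∈ Finset.univ.filter (fun p : Fin n => ¬ p.1 < 2*s),
        (Bmat n l s h2s A σ β) p (τ p) = (if σ p = τ p then (1:ℝ) else 0) := by
      intro p hp
      have hp2 : ¬ p.1 < 2*s := (Finset.mem_filter.1 hp).2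
      simp only [Bmat, Matrix.of_apply]
      rw [dif_neg hp2]
    rw [Finset.prod_congr rfl h2, Finset.prod_boole]
    have h3 : (∀ p ∈ Finset.univ.filter (fun p : Fin n => ¬ p.1 < 2*s), σ p = τ p)
        ↔ (∀ p : Fin n, 2*s ≤ p.1 → σ p = τ p) := by
      constructor
      · intro h p hp
        exact h p (by simp only [Finset.mem_filter, Finset.mem_univ, true_and]; omega)
      · intro h p hp
        have hp2 := (Finset.mem_filter.1 hp).2
        exact h p (by omega)
    simp only [h3]

lemma hσβ (n l s : ℕ) (h2s : 2*s ≤ n) (A : Fin l → Matrix (Fin n) (Fin n) ℝ)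
    (σ : Equiv.Perm (Fin n)) (β : Fin s → Fin l) :
    ((Equiv.Perm.sign σ : ℤ) : ℝ) * (Bmat n l s h2s A σ β).det
      = ∑ g : Equiv.Perm (Fin (2*s)), ((Equiv.Perm.sign g : ℤ) : ℝ) *
          ∏ a : Fin (2*s),
            -(A (β ⟨a.1/2, by omega⟩) (σ (Fin.castLE h2s a)) (σ (Fin.castLE h2s (g a)))) := by
  classical
  rw [hdet n l s h2s A σ β, Finset.mul_sum]
  have e0 : ∑ τ : Equiv.Perm (Fin n), ((Equiv.Perm.sign σ : ℤ) : ℝ) *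
        (((Equiv.Perm.sign τ : ℤ) : ℝ) *
          ((∏ a : Fin (2*s),
            -(A (β ⟨a.1/2, by omega⟩) (σ (Fin.castLE h2s a)) (τ (Fin.castLE h2s a))))
            * (if ∀ p : Fin n, 2*s ≤ p.1 → σ p = τ p then (1:ℝ) else 0)))
      = ∑ ρ : Equiv.Perm (Fin n), ((Equiv.Perm.sign σ : ℤ) : ℝ) *
        (((Equiv.Perm.sign (σ * ρ) : ℤ) : ℝ) *
          ((∏ a : Fin (2*s),
            -(A (β ⟨a.1/2, by omega⟩) (σ (Fin.castLE h2s a)) ((σ * ρ) (Fin.castLE h2s a))))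
            * (if ∀ p : Fin n, 2*s ≤ p.1 → σ p = (σ * ρ) p then (1:ℝ) else 0))) :=
    (Fintype.sum_equiv (Equiv.mulLeft σ) _ _ (fun ρ => rfl)).symm
  rw [e0]
  have e1 : ∀ ρ : Equiv.Perm (Fin n),
      ((Equiv.Perm.sign σ : ℤ) : ℝ) *
        (((Equiv.Perm.sign (σ * ρ) : ℤ) : ℝ) *
          ((∏ a : Fin (2*s),
            -(A (β ⟨a.1/2, by omega⟩) (σ (Fin.castLE h2s a)) ((σ * ρ) (Fin.castLE h2s a))))
            * (if ∀ p : Fin n, 2*s ≤ p.1 → σ p = (σ * ρ) p then (1:ℝ) else 0)))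
      = (if ∀ p : Fin n, 2*s ≤ p.1 → ρ p = p then
          (((Equiv.Perm.sign ρ : ℤ) : ℝ) *
            ∏ a : Fin (2*s),
              -(A (β ⟨a.1/2, by omega⟩) (σ (Fin.castLE h2s a)) ((σ * ρ) (Fin.castLE h2s a))))
          else 0) := by
    intro ρ
    have hcond : (∀ p : Fin n, 2*s ≤ p.1 → σ p = (σ * ρ) p)
        ↔ (∀ p : Fin n, 2*s ≤ p.1 → ρ p = p) := by
      apply forall₂_congr
      intro p hp
      rw [Equiv.Perm.mul_apply]
      constructor
      · intro h; exact (σ.injective h).symm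
      · intro h; rw [h]
    by_cases h : ∀ p : Fin n, 2*s ≤ p.1 → ρ p = p
    · rw [if_pos h, if_pos (hcond.2 h), mul_one, ← mul_assoc]
      congr 1
      rw [Equiv.Perm.sign_mul]
      exact unit_cast_mul _ _
    · rw [if_neg h, if_neg (fun hh => h (hcond.1 hh)), mul_zero, mul_zero, mul_zero]
  rw [Finset.sum_congr rfl (fun ρ _ => e1 ρ)]
  rw [sum_tailfix h2s (fun ρ => ((Equiv.Perm.sign ρ : ℤ) : ℝ) *
    ∏ a : Fin (2*s),
      -(A (β ⟨a.1/2, by omega⟩) (σ (Fin.castLE h2s a)) ((σ * ρ) (Fin.castLE h2s a))))]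
  apply Finset.sum_congr rfl
  intro g _
  congr 1
  · rw [Equiv.Perm.sign_extendDomain]
  · apply Finset.prod_congr rfl
    intro a _
    congr 2
    show σ ((g.extendDomain (headEquiv h2s).symm) (Fin.castLE h2s a)) = _
    rw [ext_apply_head h2s]


lemma prod_neg_even (s : ℕ) (x : Fin (2*s) → ℝ) :
    (∏ a : Fin (2*s), -(x a)) = ∏ a : Fin (2*s), x a := by
  have h1 : (∏ a : Fin (2*s), -(x a)) = ∏ a : Fin (2*s), ((-1 : ℝ) * x a) :=
    Finset.prod_congr rfl (fun a _ => by ring)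
  rw [h1, Finset.prod_mul_distrib, Finset.prod_const, Finset.card_univ, Fintype.card_fin]
  rw [Even.neg_one_pow ⟨s, by ring⟩, one_mul]

lemma hβ (n l s : ℕ) (h2s : 2*s ≤ n) (A : Fin l → Matrix (Fin n) (Fin n) ℝ)
    (I J : Fin (2*s) → Fin n) :
    (∑ β : Fin s → Fin l, ∏ a : Fin (2*s), -(A (β ⟨a.1/2, by omega⟩) (J a) (I a)))
      = pairProd A s I J := by
  classical
  have h1 : ∀ β : Fin s → Fin l,
      (∏ a : Fin (2*s), -(A (β ⟨a.1/2, by omega⟩) (J a) (I a)))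
        = ∏ t : Fin s, (A (β t) (J ⟨2*t.1, by omega⟩) (I ⟨2*t.1, by omega⟩)
            * A (β t) (J ⟨2*t.1+1, by omega⟩) (I ⟨2*t.1+1, by omega⟩)) := by
    intro β
    rw [prod_neg_even s _]
    have h2 := fin_prod_pairs s (fun k =>
      if hk : k < 2*s then A (β ⟨k/2, by omega⟩) (J ⟨k, hk⟩) (I ⟨k, hk⟩) else 1)
    have h3 : (∏ a : Fin (2*s), A (β ⟨a.1/2, by omega⟩) (J a) (I a))
        = ∏ a : Fin (2*s), (fun k =>
          if hk : k < 2*s then A (β ⟨k/2, by omega⟩) (J ⟨k, hk⟩) (I ⟨k, hk⟩) else 1) a.1 := by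
      apply Finset.prod_congr rfl
      intro a _
      show _ = if hk : a.1 < 2*s then A (β ⟨a.1/2, by omega⟩) (J ⟨a.1, hk⟩) (I ⟨a.1, hk⟩) else 1
      rw [dif_pos a.2]
    rw [h3, h2]
    apply Finset.prod_congr rfl
    intro t _
    have ht1 : 2*t.1 < 2*s := by omega
    have ht2 : 2*t.1+1 < 2*s := by omega
    rw [dif_pos ht1, dif_pos ht2]
    congr 2
    · exact congrArg β (Fin.ext (show 2*t.1/2 = t.1 by omega))
    · exact congrArg β (Fin.ext (show (2*t.1+1)/2 = t.1 by omega))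
  rw [Finset.sum_congr rfl (fun β _ => h1 β)]
  have h4 : pairProd A s I J = ∏ t : Fin s, ∑ α : Fin l,
      (A α (J ⟨2*t.1, by omega⟩) (I ⟨2*t.1, by omega⟩)
        * A α (J ⟨2*t.1+1, by omega⟩) (I ⟨2*t.1+1, by omega⟩)) := by
    apply Finset.prod_congr rfl
    intro t _
    rfl
  rw [h4, Finset.prod_univ_sum, ← Fintype.piFinset_univ]

lemma hgk (n s : ℕ) (i j : Fin (2*s) → Fin n) :
    gKron i j = ∑ g : Equiv.Perm (Fin (2*s)), ((Equiv.Perm.sign g : ℤ) : ℝ) *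
      (if ∀ b, i (g b) = j b then (1:ℝ) else 0) := by
  classical
  rw [gKron, Matrix.det_apply]
  apply Finset.sum_congr rfl
  intro g _
  rw [Units.smul_def, zsmul_eq_mul]
  congr 1
  have h1 : ∀ b : Fin (2*s), (Matrix.of fun a b : Fin (2*s) =>
      if i a = j b then (1:ℝ) else 0) (g b) b = (if i (g b) = j b then (1:ℝ) else 0) :=
    fun b => rfl
  rw [Finset.prod_congr rfl (fun b _ => h1 b), Finset.prod_boole]
  simp


lemma factorial_cast_ne (m : ℕ) : ((m.factorial : ℝ)) ≠ 0 := by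
  exact_mod_cast Nat.factorial_ne_zero m

lemma step2 (n l s : ℕ) (h2s : 2*s ≤ n) (A : Fin l → Matrix (Fin n) (Fin n) ℝ) :
    (∑ σ : Equiv.Perm (Fin n), ∑ β : Fin s → Fin l,
      ((Equiv.Perm.sign σ : ℤ) : ℝ) * (Bmat n l s h2s A σ β).det)
    = ((2*s).factorial : ℝ) * (((n - 2*s).factorial : ℕ) : ℝ) * meanCurv A s := by
  classical
  -- LHS chain
  have L1 : (∑ σ : Equiv.Perm (Fin n), ∑ β : Fin s → Fin l,
      ((Equiv.Perm.sign σ : ℤ) : ℝ) * (Bmat n l s h2s A σ β).det)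
      = ∑ g : Equiv.Perm (Fin (2*s)), ((Equiv.Perm.sign g : ℤ) : ℝ) *
          ∑ σ : Equiv.Perm (Fin n),
            pairProd A s (fun a => σ (Fin.castLE h2s (g a)))
              (fun a => σ (Fin.castLE h2s a)) := by
    calc (∑ σ : Equiv.Perm (Fin n), ∑ β : Fin s → Fin l,
        ((Equiv.Perm.sign σ : ℤ) : ℝ) * (Bmat n l s h2s A σ β).det)
        = ∑ σ : Equiv.Perm (Fin n), ∑ β : Fin s → Fin l,
            ∑ g : Equiv.Perm (Fin (2*s)), ((Equiv.Perm.sign g : ℤ) : ℝ) *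
              ∏ a : Fin (2*s), -(A (β ⟨a.1/2, by omega⟩) (σ (Fin.castLE h2s a))
                (σ (Fin.castLE h2s (g a)))) :=
          Finset.sum_congr rfl (fun σ _ => Finset.sum_congr rfl (fun β _ =>
            hσβ n l s h2s A σ β))
      _ = ∑ σ : Equiv.Perm (Fin n), ∑ g : Equiv.Perm (Fin (2*s)),
            ∑ β : Fin s → Fin l, ((Equiv.Perm.sign g : ℤ) : ℝ) *
              ∏ a : Fin (2*s), -(A (β ⟨a.1/2, by omega⟩) (σ (Fin.castLE h2s a))
                (σ (Fin.castLE h2s (g a)))) :=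
          Finset.sum_congr rfl (fun σ _ => Finset.sum_comm)
      _ = ∑ σ : Equiv.Perm (Fin n), ∑ g : Equiv.Perm (Fin (2*s)),
            ((Equiv.Perm.sign g : ℤ) : ℝ) *
              pairProd A s (fun a => σ (Fin.castLE h2s (g a)))
                (fun a => σ (Fin.castLE h2s a)) := by
          apply Finset.sum_congr rfl
          intro σ _
          apply Finset.sum_congr rfl
          intro g _
          rw [← Finset.mul_sum, hβ n l s h2s A
            (fun a => σ (Fin.castLE h2s (g a))) (fun a => σ (Fin.castLE h2s a))]
      _ = ∑ g : Equiv.Perm (Fin (2*s)), ∑ σ : Equiv.Perm (Fin n),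
            ((Equiv.Perm.sign g : ℤ) : ℝ) *
              pairProd A s (fun a => σ (Fin.castLE h2s (g a)))
                (fun a => σ (Fin.castLE h2s a)) := Finset.sum_comm
      _ = _ := Finset.sum_congr rfl (fun g _ => (Finset.mul_sum _ _ _).symm)
  have L2 : ∀ g : Equiv.Perm (Fin (2*s)),
      (∑ σ : Equiv.Perm (Fin n),
        pairProd A s (fun a => σ (Fin.castLE h2s (g a))) (fun a => σ (Fin.castLE h2s a)))
      = (((n - 2*s).factorial : ℕ) : ℝ) *
          ∑ jj ∈ Finset.univ.filter (fun j : Fin (2*s) → Fin n => Function.Injective j),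
            pairProd A s (fun a => jj (g a)) jj := by
    intro g
    have := core_count h2s (fun jj : Fin (2*s) → Fin n =>
      pairProd A s (fun a => jj (g a)) jj)
    exact this
  -- RHS chain
  have R1 : ((2*s).factorial : ℝ) * (((n - 2*s).factorial : ℕ) : ℝ) * meanCurv A s
      = (((n - 2*s).factorial : ℕ) : ℝ) *
          ∑ i : Fin (2*s) → Fin n, ∑ j : Fin (2*s) → Fin n,
            gKron i j * pairProd A s i j := by
    rw [meanCurv]
    have h0 := factorial_cast_ne (2*s)
    field_simp
  have hicond : ∀ (g : Equiv.Perm (Fin (2*s))) (i j : Fin (2*s) → Fin n),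
      (∀ b, i (g b) = j b) ↔ i = fun b => j (g⁻¹ b) := by
    intro g i j
    constructor
    · intro h
      funext b
      have h1 : i (g (g⁻¹ b)) = j (g⁻¹ b) := h (g⁻¹ b)
      rwa [Equiv.Perm.coe_inv, Equiv.apply_symm_apply] at h1
    · intro h
      subst h
      intro b
      show j (g⁻¹ (g b)) = j b
      rw [Equiv.Perm.coe_inv, Equiv.symm_apply_apply]
  have R2 : (∑ i : Fin (2*s) → Fin n, ∑ j : Fin (2*s) → Fin n,
        gKron i j * pairProd A s i j)
      = ∑ g : Equiv.Perm (Fin (2*s)), ((Equiv.Perm.sign g : ℤ) : ℝ) *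
          ∑ j : Fin (2*s) → Fin n, pairProd A s (fun a => j (g a)) j := by
    calc (∑ i : Fin (2*s) → Fin n, ∑ j : Fin (2*s) → Fin n,
          gKron i j * pairProd A s i j)
        = ∑ i : Fin (2*s) → Fin n, ∑ j : Fin (2*s) → Fin n,
            ∑ g : Equiv.Perm (Fin (2*s)),
              ((Equiv.Perm.sign g : ℤ) : ℝ) * (if ∀ b, i (g b) = j b then (1:ℝ) else 0)
                * pairProd A s i j := by
          apply Finset.sum_congr rfl; intro i _
          apply Finset.sum_congr rfl; intro j _
          rw [hgk n s i j, Finset.sum_mul]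
      _ = ∑ i : Fin (2*s) → Fin n, ∑ g : Equiv.Perm (Fin (2*s)),
            ∑ j : Fin (2*s) → Fin n,
              ((Equiv.Perm.sign g : ℤ) : ℝ) * (if ∀ b, i (g b) = j b then (1:ℝ) else 0)
                * pairProd A s i j :=
          Finset.sum_congr rfl (fun i _ => Finset.sum_comm)
      _ = ∑ g : Equiv.Perm (Fin (2*s)), ∑ i : Fin (2*s) → Fin n,
            ∑ j : Fin (2*s) → Fin n,
              ((Equiv.Perm.sign g : ℤ) : ℝ) * (if ∀ b, i (g b) = j b then (1:ℝ) else 0)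
                * pairProd A s i j := Finset.sum_comm
      _ = ∑ g : Equiv.Perm (Fin (2*s)), ∑ j : Fin (2*s) → Fin n,
            ∑ i : Fin (2*s) → Fin n,
              ((Equiv.Perm.sign g : ℤ) : ℝ) * (if ∀ b, i (g b) = j b then (1:ℝ) else 0)
                * pairProd A s i j :=
          Finset.sum_congr rfl (fun g _ => Finset.sum_comm)
      _ = ∑ g : Equiv.Perm (Fin (2*s)), ∑ j : Fin (2*s) → Fin n,
            ((Equiv.Perm.sign g : ℤ) : ℝ) * pairProd A s (fun b => j (g⁻¹ b)) j := by
          apply Finset.sum_congr rfl; intro g _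
          apply Finset.sum_congr rfl; intro j _
          have h1 : ∀ i : Fin (2*s) → Fin n,
              ((Equiv.Perm.sign g : ℤ) : ℝ) * (if ∀ b, i (g b) = j b then (1:ℝ) else 0)
                * pairProd A s i j
              = (if i = (fun b => j (g⁻¹ b)) then
                  ((Equiv.Perm.sign g : ℤ) : ℝ) * pairProd A s i j else 0) := by
            intro i
            rw [if_congr (hicond g i j) rfl rfl]
            by_cases h : i = fun b => j (g⁻¹ b)
            · rw [if_pos h, if_pos h]; ring
            · rw [if_neg h, if_neg h]; ring
          rw [Finset.sum_congr rfl (fun i _ => h1 i), Finset.sum_ite_eq' Finset.univ]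
          rw [if_pos (Finset.mem_univ _)]
      _ = _ := by
          apply Fintype.sum_equiv (Equiv.inv (Equiv.Perm (Fin (2*s))))
          intro g
          simp only [Equiv.inv_apply]
          rw [Equiv.Perm.sign_inv, Finset.mul_sum]
  -- vanishing of non-injective part
  have hvan : (∑ g : Equiv.Perm (Fin (2*s)), ((Equiv.Perm.sign g : ℤ) : ℝ) *
        ∑ jj ∈ Finset.univ.filter (fun j : Fin (2*s) → Fin n => ¬ Function.Injective j),
          pairProd A s (fun a => jj (g a)) jj) = 0 := by
    have h1 : (∑ g : Equiv.Perm (Fin (2*s)), ((Equiv.Perm.sign g : ℤ) : ℝ) *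
          ∑ jj ∈ Finset.univ.filter (fun j : Fin (2*s) → Fin n => ¬ Function.Injective j),
            pairProd A s (fun a => jj (g a)) jj)
        = ∑ jj ∈ Finset.univ.filter (fun j : Fin (2*s) → Fin n => ¬ Function.Injective j),
            ∑ g : Equiv.Perm (Fin (2*s)), ((Equiv.Perm.sign g : ℤ) : ℝ) *
              pairProd A s (fun a => jj (g a)) jj := by
      rw [Finset.sum_congr rfl (fun g (_ : g ∈ Finset.univ) => Finset.mul_sum _ _ _)]
      exact Finset.sum_comm
    rw [h1]
    apply Finset.sum_eq_zero
    intro jj hjj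
    have hni : ¬ Function.Injective jj := (Finset.mem_filter.1 hjj).2
    obtain ⟨a, b, hab1, hab2⟩ := Function.not_injective_iff.1 hni
    apply sum_perm_swap_zero _ a b hab2
    intro g
    congr 1
    funext x
    show jj (Equiv.swap a b (g x)) = jj (g x)
    rcases eq_or_ne (g x) a with h | h
    · rw [h, Equiv.swap_apply_left]
      exact hab1.symm
    rcases eq_or_ne (g x) b with h2 | h2
    · rw [h2, Equiv.swap_apply_right]
      exact hab1
    · rw [Equiv.swap_apply_of_ne_of_ne h h2]
  -- put everything together
  rw [L1, R1, R2]
  have split : ∀ g : Equiv.Perm (Fin (2*s)),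
      (∑ j : Fin (2*s) → Fin n, pairProd A s (fun a => j (g a)) j)
      = (∑ jj ∈ Finset.univ.filter (fun j : Fin (2*s) → Fin n => Function.Injective j),
          pairProd A s (fun a => jj (g a)) jj)
        + ∑ jj ∈ Finset.univ.filter (fun j : Fin (2*s) → Fin n => ¬ Function.Injective j),
            pairProd A s (fun a => jj (g a)) jj := by
    intro g
    exact (Finset.sum_filter_add_sum_filter_not Finset.univ _ _).symm
  calc ∑ g : Equiv.Perm (Fin (2*s)), ((Equiv.Perm.sign g : ℤ) : ℝ) *
        ∑ σ : Equiv.Perm (Fin n),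
          pairProd A s (fun a => σ (Fin.castLE h2s (g a))) (fun a => σ (Fin.castLE h2s a))
      = ∑ g : Equiv.Perm (Fin (2*s)), (((n - 2*s).factorial : ℕ) : ℝ) *
          (((Equiv.Perm.sign g : ℤ) : ℝ) *
            ∑ jj ∈ Finset.univ.filter (fun j : Fin (2*s) → Fin n => Function.Injective j),
              pairProd A s (fun a => jj (g a)) jj) := by
        apply Finset.sum_congr rfl
        intro g _
        rw [L2 g]
        ring
    _ = (((n - 2*s).factorial : ℕ) : ℝ) *
          ∑ g : Equiv.Perm (Fin (2*s)), ((Equiv.Perm.sign g : ℤ) : ℝ) *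
            ∑ jj ∈ Finset.univ.filter (fun j : Fin (2*s) → Fin n => Function.Injective j),
              pairProd A s (fun a => jj (g a)) jj := (Finset.mul_sum _ _ _).symm
    _ = (((n - 2*s).factorial : ℕ) : ℝ) *
          ∑ g : Equiv.Perm (Fin (2*s)), ((Equiv.Perm.sign g : ℤ) : ℝ) *
            ∑ j : Fin (2*s) → Fin n, pairProd A s (fun a => j (g a)) j := by
        congr 1
        rw [← add_zero (∑ g : Equiv.Perm (Fin (2*s)), ((Equiv.Perm.sign g : ℤ) : ℝ) *
          ∑ jj ∈ Finset.univ.filter (fun j : Fin (2*s) → Fin n => Function.Injective j),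
            pairProd A s (fun a => jj (g a)) jj), ← hvan, ← Finset.sum_add_distrib]
        apply Finset.sum_congr rfl
        intro g _
        rw [split g]
        ring

end Step2

-- NEW MATERIAL
section Exterior
variable (n l : ℕ) (A : Fin l → Matrix (Fin n) (Fin n) ℝ)
  (X : Fin n → Fin l → Fin l → ℝ)

def wVec (i : Fin n) (α : Fin l) : Fin (n+l) → ℝ :=
  (-(∑ j : Fin n, A α i j • (Pi.single (Fin.castAdd l j) (1:ℝ) : Fin (n+l) → ℝ)))
    + ∑ β : Fin l, X i α β • (Pi.single (Fin.natAdd n β) (1:ℝ) : Fin (n+l) → ℝ)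

lemma omegaForm_eq (i : Fin n) (α : Fin l) :
    omegaForm A X i α = ExteriorAlgebra.ι ℝ (wVec n l A X i α) := by
  rw [omegaForm, wVec]
  simp [theta, map_add, map_neg, map_sum, map_smul]

lemma wVec_castAdd (i : Fin n) (α : Fin l) (u : Fin n) :
    wVec n l A X i α (Fin.castAdd l u) = -(A α i u) := by
  rw [wVec, Pi.add_apply, Pi.neg_apply, Finset.sum_apply, Finset.sum_apply]
  have h1 : ∀ j : Fin n, (A α i j • (Pi.single (Fin.castAdd l j) (1:ℝ) : Fin (n+l) → ℝ)) (Fin.castAdd l u)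
      = if j = u then A α i u else 0 := by
    intro j
    rw [Pi.smul_apply, Pi.single_apply]
    by_cases h : j = u
    · subst h; simp
    · rw [if_neg (fun hh => h (Fin.castAdd_inj.1 hh.symm)), if_neg h, smul_zero]
  have h2 : ∀ b : Fin l, (X i α b • (Pi.single (Fin.natAdd n b) (1:ℝ) : Fin (n+l) → ℝ)) (Fin.castAdd l u)
      = 0 := by
    intro b
    rw [Pi.smul_apply, Pi.single_apply, if_neg (by simp [Fin.ext_iff]; omega), smul_zero]
  rw [Finset.sum_congr rfl (fun j _ => h1 j), Finset.sum_congr rfl (fun b _ => h2 b),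
    Finset.sum_ite_eq' Finset.univ u (fun _ => A α i u), if_pos (Finset.mem_univ u),
    Finset.sum_const_zero, add_zero]

lemma wVec_natAdd (i : Fin n) (α : Fin l) (b : Fin l) :
    wVec n l A X i α (Fin.natAdd n b) = X i α b := by
  rw [wVec, Pi.add_apply, Pi.neg_apply, Finset.sum_apply, Finset.sum_apply]
  have h1 : ∀ j : Fin n, (A α i j • (Pi.single (Fin.castAdd l j) (1:ℝ) : Fin (n+l) → ℝ)) (Fin.natAdd n b)
      = 0 := by
    intro j
    rw [Pi.smul_apply, Pi.single_apply, if_neg (by simp [Fin.ext_iff]; omega), smul_zero]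
  have h2 : ∀ c : Fin l, (X i α c • (Pi.single (Fin.natAdd n c) (1:ℝ) : Fin (n+l) → ℝ)) (Fin.natAdd n b)
      = if c = b then X i α b else 0 := by
    intro c
    rw [Pi.smul_apply, Pi.single_apply]
    by_cases h : c = b
    · subst h; simp
    · rw [if_neg (fun hh => h (Fin.ext (by
        have := congrArg Fin.val hh
        simp only [Fin.coe_natAdd] at this
        omega))), if_neg h, smul_zero]
  rw [Finset.sum_congr rfl (fun j _ => h1 j), Finset.sum_congr rfl (fun c _ => h2 c),
    Finset.sum_const_zero, Finset.sum_ite_eq' Finset.univ b (fun _ => X i α b),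
    if_pos (Finset.mem_univ b), neg_zero, zero_add]


variable (s : ℕ) (h2s : 2*s ≤ n)

def rowN (σ : Equiv.Perm (Fin n)) (β : Fin s → Fin l) (k : ℕ) : Fin (n+l) → ℝ :=
  if h : k < 2*s then wVec n l A X (σ ⟨k, by omega⟩) (β ⟨k/2, by omega⟩)
  else if h2 : k < n then (Pi.single (Fin.castAdd l (σ ⟨k, h2⟩)) (1:ℝ) : Fin (n+l) → ℝ)
  else if h3 : k < n + l then
    (Pi.single (Fin.natAdd n (⟨k - n, by omega⟩ : Fin l)) (1:ℝ) : Fin (n+l) → ℝ)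
  else 0

lemma term_eq (σ : Equiv.Perm (Fin n)) (β : Fin s → Fin l) :
    (((List.finRange s).map (fun t =>
        omegaForm A X (σ ⟨2 * t.1, by omega⟩) (β t) *
        omegaForm A X (σ ⟨2 * t.1 + 1, by omega⟩) (β t))).prod *
      ((List.finRange (n - 2 * s)).map (fun k =>
        theta (Fin.castAdd l (σ ⟨2 * s + k.1, by omega⟩)))).prod) * nuForm n l
    = (Matrix.of (fun k : Fin (n+l) =>
        rowN n l A X s h2s σ β k.1)).det • volForm n l := by
  have hP1 : ((List.finRange s).map (fun t =>
        omegaForm A X (σ ⟨2 * t.1, by omega⟩) (β t) *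
        omegaForm A X (σ ⟨2 * t.1 + 1, by omega⟩) (β t))).prod
      = ((List.range (2*s)).map
          (fun k => ExteriorAlgebra.ι ℝ (rowN n l A X s h2s σ β k))).prod := by
    rw [← range_prod_pairs (fun k => ExteriorAlgebra.ι ℝ (rowN n l A X s h2s σ β k)) s]
    apply finRange_prod_eq_range_prod
    intro k hk
    have e1 : rowN n l A X s h2s σ β (2*k)
        = wVec n l A X (σ ⟨2*k, by omega⟩) (β ⟨k, hk⟩) := by
      rw [rowN, dif_pos (show 2*k < 2*s by omega)]
      exact congrArg _ (congrArg β (Fin.ext (show 2*k/2 = k by omega)))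
    have e2 : rowN n l A X s h2s σ β (2*k+1)
        = wVec n l A X (σ ⟨2*k+1, by omega⟩) (β ⟨k, hk⟩) := by
      rw [rowN, dif_pos (show 2*k+1 < 2*s by omega)]
      exact congrArg _ (congrArg β (Fin.ext (show (2*k+1)/2 = k by omega)))
    rw [e1, e2, omegaForm_eq, omegaForm_eq]
  have hP2 : ((List.finRange (n - 2 * s)).map (fun k =>
        theta (Fin.castAdd l (σ ⟨2 * s + k.1, by omega⟩)))).prod
      = ((List.range (n - 2*s)).map
          (fun k => ExteriorAlgebra.ι ℝ (rowN n l A X s h2s σ β (2*s + k)))).prod := by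
    apply finRange_prod_eq_range_prod
    intro k hk
    have e1 : rowN n l A X s h2s σ β (2*s+k)
        = (Pi.single (Fin.castAdd l (σ ⟨2*s+k, by omega⟩)) (1:ℝ) : Fin (n+l) → ℝ) := by
      rw [rowN, dif_neg (show ¬ 2*s+k < 2*s by omega), dif_pos (show 2*s+k < n by omega)]
    rw [e1]
    rfl
  have hP3 : nuForm n l
      = ((List.range l).map
          (fun k => ExteriorAlgebra.ι ℝ (rowN n l A X s h2s σ β (n + k)))).prod := by
    rw [nuForm]
    apply finRange_prod_eq_range_prod
    intro k hk
    have e1 : rowN n l A X s h2s σ β (n+k)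
        = (Pi.single (Fin.natAdd n (⟨k, hk⟩ : Fin l)) (1:ℝ) : Fin (n+l) → ℝ) := by
      rw [rowN, dif_neg (show ¬ n+k < 2*s by omega), dif_neg (show ¬ n+k < n by omega),
        dif_pos (show n+k < n+l by omega)]
      exact congrArg (fun z : Fin l => (Pi.single (Fin.natAdd n z) (1:ℝ) : Fin (n+l) → ℝ))
        (Fin.ext (show n+k-n = k by omega))
    rw [e1]
    rfl
  rw [hP1, hP2, hP3]
  have hsplit : ((List.range (n+l)).map
        (fun k => ExteriorAlgebra.ι ℝ (rowN n l A X s h2s σ β k))).prod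
      = (((List.range (2*s)).map
          (fun k => ExteriorAlgebra.ι ℝ (rowN n l A X s h2s σ β k))).prod
        * ((List.range (n-2*s)).map
            (fun k => ExteriorAlgebra.ι ℝ (rowN n l A X s h2s σ β (2*s + k)))).prod)
        * ((List.range l).map
            (fun k => ExteriorAlgebra.ι ℝ (rowN n l A X s h2s σ β (n + k)))).prod := by
    rw [range_prod_split (fun k => ExteriorAlgebra.ι ℝ (rowN n l A X s h2s σ β k)) n l]
    congr 1
    have h9 : List.range n = List.range (2*s + (n - 2*s)) := by
      congr 1
      omega
    rw [h9, range_prod_split]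
  rw [← hsplit]
  have hfin : ((List.range (n+l)).map
        (fun k => ExteriorAlgebra.ι ℝ (rowN n l A X s h2s σ β k))).prod
      = ((List.finRange (n+l)).map
          (fun k : Fin (n+l) => ExteriorAlgebra.ι ℝ
            ((fun k' : Fin (n+l) => rowN n l A X s h2s σ β k'.1) k))).prod :=
    (finRange_prod_eq_range_prod (n+l) _ _ (fun k hk => rfl)).symm
  rw [hfin, prod_ι_eq_det n l (fun k' : Fin (n+l) => rowN n l A X s h2s σ β k'.1)]

lemma det_eq_bmat (σ : Equiv.Perm (Fin n)) (β : Fin s → Fin l) :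
    (Matrix.of (fun k : Fin (n+l) => rowN n l A X s h2s σ β k.1)).det
      = (Step2.Bmat n l s h2s A σ β).det := by
  rw [← Matrix.det_submatrix_equiv_self finSumFinEquiv
    (Matrix.of (fun k : Fin (n+l) => rowN n l A X s h2s σ β k.1))]
  have hb : (Matrix.of (fun k : Fin (n+l) =>
        rowN n l A X s h2s σ β k.1)).submatrix finSumFinEquiv finSumFinEquiv
      = Matrix.fromBlocks (Step2.Bmat n l s h2s A σ β)
          (Matrix.of fun (p : Fin n) (b : Fin l) => rowN n l A X s h2s σ β p.1 (Fin.natAdd n b))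
          0 1 := by
    ext i j
    rcases i with p | c <;> rcases j with u | b
    · simp only [Matrix.submatrix_apply, finSumFinEquiv_apply_left,
        Matrix.fromBlocks_apply₁₁, Matrix.of_apply]
      show rowN n l A X s h2s σ β (Fin.castAdd l p).1 (Fin.castAdd l u)
        = Step2.Bmat n l s h2s A σ β p u
      have hcast : (Fin.castAdd l p).1 = p.1 := rfl
      rw [hcast, rowN, Step2.Bmat]
      by_cases h : p.1 < 2*s
      · rw [dif_pos h]
        show wVec n l A X (σ ⟨p.1, by omega⟩) (β ⟨p.1/2, by omega⟩) (Fin.castAdd l u)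
          = (Matrix.of fun p u => if h : p.1 < 2*s
              then -(A (β ⟨p.1/2, by omega⟩) (σ p) u)
              else (if σ p = u then (1:ℝ) else 0)) p u
        rw [Matrix.of_apply, dif_pos h, wVec_castAdd]
      · rw [dif_neg h, dif_pos p.2, Matrix.of_apply, dif_neg h, Pi.single_apply]
        have hiff : (Fin.castAdd l u = Fin.castAdd l (σ ⟨p.1, p.2⟩)) ↔ (σ p = u) := by
          rw [Fin.castAdd_inj]
          exact eq_comm
        rw [if_congr hiff rfl rfl]
    · rfl
    · simp only [Matrix.submatrix_apply, finSumFinEquiv_apply_right,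
        finSumFinEquiv_apply_left, Matrix.fromBlocks_apply₂₁, Matrix.of_apply]
      show rowN n l A X s h2s σ β (Fin.natAdd n c).1 (Fin.castAdd l u) = (0 : ℝ)
      have hcast : (Fin.natAdd n c).1 = n + c.1 := rfl
      rw [hcast, rowN, dif_neg (show ¬ n + c.1 < 2*s by omega),
        dif_neg (show ¬ n + c.1 < n by omega), dif_pos (show n + c.1 < n + l by omega),
        Pi.single_apply, if_neg (fun hh => by
          have h2 : u.1 = n + (n + c.1 - n) := congrArg Fin.val hh
          have h3 := u.2
          omega)]
    · simp only [Matrix.submatrix_apply, finSumFinEquiv_apply_right,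
        Matrix.fromBlocks_apply₂₂, Matrix.of_apply]
      show rowN n l A X s h2s σ β (Fin.natAdd n c).1 (Fin.natAdd n b) = (1 : Matrix (Fin l) (Fin l) ℝ) c b
      have hcast : (Fin.natAdd n c).1 = n + c.1 := rfl
      rw [hcast, rowN, dif_neg (show ¬ n + c.1 < 2*s by omega),
        dif_neg (show ¬ n + c.1 < n by omega), dif_pos (show n + c.1 < n + l by omega),
        Pi.single_apply, Matrix.one_apply]
      have hiff : (Fin.natAdd n b = Fin.natAdd n (⟨n + c.1 - n, by omega⟩ : Fin l)) ↔ (c = b) := by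
        constructor
        · intro hh
          have h2 : n + b.1 = n + (n + c.1 - n) := congrArg Fin.val hh
          have h3 := c.2
          exact Fin.ext (show c.1 = b.1 by omega)
        · intro hh
          subst hh
          have h3 := c.2
          exact congrArg (Fin.natAdd n) (Fin.ext (show c.1 = n + c.1 - n by omega))
      rw [if_congr hiff rfl rfl]
  rw [hb, Matrix.det_fromBlocks_zero₂₁, Matrix.det_one, mul_one]

end Exterior

end Stmt7Aux

theorem stmt7 (n l : ℕ) (hn : 1 ≤ n) (hl : 1 ≤ l)
    (A : Fin l → Matrix (Fin n) (Fin n) ℝ) (r s : ℕ) (hr : r = 2 * s) (hrn : r ≤ n)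
    (X : Fin n → Fin l → Fin l → ℝ) :
    GammaForm A X s (by omega) * nuForm n l =
      ((Nat.factorial r : ℝ) * (Nat.factorial (n - r) : ℝ) * meanCurv A s) •
        volForm n l := by
  subst hr
  have h2s : 2 * s ≤ n := hrn
  have key : ∀ (σ : Equiv.Perm (Fin n)) (β : Fin s → Fin l),
      (((List.finRange s).map (fun t =>
          omegaForm A X (σ ⟨2 * t.1, by omega⟩) (β t) *
          omegaForm A X (σ ⟨2 * t.1 + 1, by omega⟩) (β t))).prod *
        ((List.finRange (n - 2 * s)).map (fun k =>
          theta (Fin.castAdd l (σ ⟨2 * s + k.1, by omega⟩)))).prod) * nuForm n l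
      = (Stmt7Aux.Step2.Bmat n l s h2s A σ β).det • volForm n l := by
    intro σ β
    rw [Stmt7Aux.term_eq n l A X s h2s σ β, Stmt7Aux.det_eq_bmat n l A X s h2s σ β]
  rw [GammaForm, Finset.sum_mul]
  have h1 : ∀ σ : Equiv.Perm (Fin n),
      (∑ β : Fin s → Fin l, ((Equiv.Perm.sign σ : ℤ) : ℝ) •
        (((List.finRange s).map (fun t =>
            omegaForm A X (σ ⟨2 * t.1, by omega⟩) (β t) *
            omegaForm A X (σ ⟨2 * t.1 + 1, by omega⟩) (β t))).prod *
          ((List.finRange (n - 2 * s)).map (fun k =>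
            theta (Fin.castAdd l (σ ⟨2 * s + k.1, by omega⟩)))).prod)) * nuForm n l
      = ∑ β : Fin s → Fin l,
          (((Equiv.Perm.sign σ : ℤ) : ℝ) * (Stmt7Aux.Step2.Bmat n l s h2s A σ β).det)
            • volForm n l := by
    intro σ
    rw [Finset.sum_mul]
    apply Finset.sum_congr rfl
    intro β _
    rw [smul_mul_assoc, key σ β, smul_smul]
  rw [Finset.sum_congr rfl (fun σ _ => h1 σ)]
  rw [Finset.sum_congr rfl (fun σ (_ : σ ∈ Finset.univ) =>
    (Finset.sum_smul).symm), ← Finset.sum_smul]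
  rw [Stmt7Aux.Step2.step2 n l s h2s A]
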